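/- For γ ∉ ℤ_{≤0}, the Euler transformation holds: ₂F₁(α, β, γ; w) = (1-w)^{γ-α-β} ₂F₁(γ-α, γ-β, γ; w) for |w| < 1, where (1-w)^{γ-α-β} denotes the principal branch. -/

import Mathlib

open Complex

open Finset Filter Topology Metric

noncomputable def pch (x : ℂ) (n : ℕ) : ℂ := (ascPochhammer ℂ n).eval x

lemma pch_zero (x : ℂ) : pch x 0 = 1 := by simp [pch]

lemma pch_succ (x : ℂ) (n : ℕ) : pch x (n+1) = pch x n * (x + n) := by
  simp [pch, ascPochhammer_succ_eval]

lemma pch_succ_left (x : ℂ) (n : ℕ) : pch x (n+1) = x * pch (x+1) n := by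
  simp [pch, ascPochhammer_succ_left, Polynomial.eval_comp]

lemma pch_one_eq (n : ℕ) : pch 1 n = n.factorial := by
  induction n with
  | zero => simp [pch_zero]
  | succ n ih => rw [pch_succ, ih]; push_cast [Nat.factorial_succ]; ring

lemma pch_add (x : ℂ) (m n : ℕ) : pch x (m + n) = pch x m * pch (x + m) n := by
  induction n with
  | zero => simp [pch_zero]
  | succ n ih => rw [← add_assoc, pch_succ, ih, pch_succ]; push_cast; ring

lemma pch_ne_zero (γ : ℂ) (hγ : ∀ n : ℕ, γ ≠ -(n : ℂ)) (n : ℕ) : pch γ n ≠ 0 := by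
  induction n with
  | zero => simp [pch_zero]
  | succ n ih =>
      rw [pch_succ]
      refine mul_ne_zero ih fun h => hγ n ?_
      linear_combination h

section Saalschutz

lemma saal_step (a b c : ℂ) (n : ℕ) :
    ∑ k ∈ range (n+2), ((n+1).choose k : ℂ) * pch a k * pch b k
        * pch (c-a-b) (n+1-k) * pch (c+k) (n+1-k)
    = ((c-a+n)*(c-b+n)) * ∑ k ∈ range (n+1), (n.choose k : ℂ) * pch a k * pch b k
        * pch (c-a-b) (n-k) * pch (c+k) (n-k) := by
  set d := c - a - b with hd
  set g : ℕ → ℂ := fun k => match k with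
    | 0 => 0
    | (j+1) => -((n.choose j : ℂ) * pch a (j+1) * pch b (j+1) * pch d (n-j) * pch (c+j) (n-j))
    with hg
  have tel : ∑ k ∈ range (n+2), (g (k+1) - g k) = 0 := by
    rw [Finset.sum_range_sub]
    simp [hg, Nat.choose_succ_self]
  have key : ∀ k ∈ range (n+2),
      ((n+1).choose k : ℂ) * pch a k * pch b k * pch d (n+1-k) * pch (c+k) (n+1-k)
      = ((c-a+n)*(c-b+n)) * ((n.choose k : ℂ) * pch a k * pch b k * pch d (n-k) * pch (c+k) (n-k))
        + (g (k+1) - g k) := by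
    intro k hk
    rw [mem_range] at hk
    match k with
    | 0 =>
      simp only [hg, Nat.choose_zero_right, Nat.cast_one, Nat.sub_zero, Nat.cast_zero]
      simp only [pch_succ, pch_zero, Nat.cast_zero, add_zero, Nat.choose_zero_right,
        Nat.cast_one, Nat.cast_ofNat]
      ring
    | (j+1) =>
      rcases Nat.lt_or_ge j n with hj | hj
      · obtain ⟨m, hm⟩ : ∃ m, n = m + (j+1) := ⟨n - (j+1), by omega⟩
        have e1 : n + 1 - (j+1) = m + 1 := by omega
        have e2 : n - (j+1) = m := by omega
        have e3 : n - j = m + 1 := by omega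
        have hcc : (n.choose (j+1) : ℂ) * ((j:ℂ)+1) = (n.choose j : ℂ) * ((m:ℂ)+1) := by
          have := Nat.choose_succ_right_eq n j
          rw [e3] at this
          exact_mod_cast congrArg (Nat.cast (R := ℂ)) this
        have hch : ((n+1).choose (j+1) : ℂ) = (n.choose j : ℂ) + (n.choose (j+1) : ℂ) := by
          rw [← Nat.cast_add, ← Nat.choose_succ_succ]
        have ea : pch a (j+1+1) = pch a (j+1) * (a + ((j:ℂ)+1)) := by
          rw [pch_succ]; push_cast; ring_nf
        have eb : pch b (j+1+1) = pch b (j+1) * (b + ((j:ℂ)+1)) := by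
          rw [pch_succ]; push_cast; ring_nf
        have ed : pch d (m+1) = pch d m * (d + (m:ℂ)) := pch_succ d m
        have ec1 : pch (c+((j+1:ℕ):ℂ)) (m+1) = pch (c+((j+1:ℕ):ℂ)) m * (c + (m:ℂ)+(j:ℂ)+1) := by
          rw [pch_succ]
          congr 1
          push_cast; ring
        have ec2 : pch (c+((j:ℕ):ℂ)) (m+1) = (c + (j:ℂ)) * pch (c+((j+1:ℕ):ℂ)) m := by
          rw [pch_succ_left]
          congr 2
          push_cast; ring
        have hn : (n : ℂ) = (m : ℂ) + (j : ℂ) + 1 := by rw [hm]; push_cast; ring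
        simp only [hg, e1, e2, e3, hch]
        rw [ea, eb, ed, ec1, ec2, hn, hd]
        have cj : ((j+1 : ℕ) : ℂ) = (j:ℂ)+1 := by push_cast; ring
        rw [cj]
        linear_combination (-(pch a (j+1) * pch b (j+1) * pch (c-a-b) m
          * pch (c + ((j:ℂ)+1)) m * (c - a - b + (m:ℂ)))) * hcc
      · have h1 : n + 1 - (j+1) = 0 := by omega
        have h2 : n - (j+1) = 0 := by omega
        have h3 : n - j = 0 := by omega
        have h4 : (n+1).choose (j+1) = 1 := by rw [show j = n by omega]; exact Nat.choose_self _
        have h5 : n.choose (j+1) = 0 := Nat.choose_eq_zero_of_lt (by omega)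
        have h6 : n.choose j = 1 := by rw [show j = n by omega]; exact Nat.choose_self _
        simp only [hg, h1, h2, h3, h4, h5, h6, pch_zero, Nat.cast_one, Nat.cast_zero]
        ring
  calc ∑ k ∈ range (n+2), ((n+1).choose k : ℂ) * pch a k * pch b k
        * pch d (n+1-k) * pch (c+k) (n+1-k)
      = ∑ k ∈ range (n+2), (((c-a+n)*(c-b+n)) * ((n.choose k : ℂ) * pch a k * pch b k
          * pch d (n-k) * pch (c+k) (n-k)) + (g (k+1) - g k)) := Finset.sum_congr rfl key
    _ = ((c-a+n)*(c-b+n)) * ∑ k ∈ range (n+2), ((n.choose k : ℂ) * pch a k * pch b k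
          * pch d (n-k) * pch (c+k) (n-k)) + ∑ k ∈ range (n+2), (g (k+1) - g k) := by
        rw [Finset.sum_add_distrib, Finset.mul_sum]
    _ = ((c-a+n)*(c-b+n)) * ∑ k ∈ range (n+1), ((n.choose k : ℂ) * pch a k * pch b k
          * pch d (n-k) * pch (c+k) (n-k)) := by
        rw [tel, add_zero, Finset.sum_range_succ, Nat.choose_succ_self]
        norm_num

lemma saalschutz (a b c : ℂ) (n : ℕ) :
    ∑ k ∈ range (n+1), (n.choose k : ℂ) * pch a k * pch b k
      * pch (c-a-b) (n-k) * pch (c+k) (n-k) = pch (c-a) n * pch (c-b) n := by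
  induction n with
  | zero => simp [pch_zero]
  | succ n ih =>
    have h := saal_step a b c n
    rw [show n+1+1 = n+2 from rfl, h, ih, pch_succ (c-a), pch_succ (c-b)]
    ring

end Saalschutz

section Summability

lemma inv_nat_tendsto : Tendsto (fun n : ℕ => ((n:ℂ)+1)⁻¹) atTop (𝓝 0) := by
  have h := (tendsto_inv_atTop_nhds_zero_nat (𝕜 := ℂ)).comp
    (tendsto_add_atTop_nat 1)
  have he : (fun n : ℕ => ((n:ℂ)+1)⁻¹) = (fun n : ℕ => (n:ℂ)⁻¹) ∘ (fun n => n+1) := by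
    funext n; simp [Function.comp]
  rw [he]; exact h

lemma L1 (x : ℂ) : Tendsto (fun n : ℕ => (x+(n:ℂ))/((n:ℂ)+1)) atTop (𝓝 1) := by
  have he : (fun n : ℕ => (x+(n:ℂ))/((n:ℂ)+1)) = fun n : ℕ => 1 + (x-1) * ((n:ℂ)+1)⁻¹ := by
    funext n
    have h0 : ((n:ℂ)+1) ≠ 0 := Nat.cast_add_one_ne_zero n
    field_simp
    ring
  rw [he]
  have := (inv_nat_tendsto.const_mul (x-1)).const_add 1
  simpa using this

lemma L2 (y z : ℂ) (hz : ∀ n : ℕ, z ≠ -(n : ℂ)) :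
    Tendsto (fun n : ℕ => (y+(n:ℂ))/(z+(n:ℂ))) atTop (𝓝 1) := by
  have hzn : ∀ n : ℕ, z + (n:ℂ) ≠ 0 := fun n h => hz n (by linear_combination h)
  have he : (fun n : ℕ => (y+(n:ℂ))/(z+(n:ℂ))) = fun n : ℕ => 1 + (y-z) * (z+(n:ℂ))⁻¹ := by
    funext n
    rw [← div_eq_mul_inv, add_div' _ _ _ (hzn n), div_eq_div_iff (hzn n) (hzn n)]
    ring
  rw [he]
  have hmain : Tendsto (fun n : ℕ => (y-z) * (z+(n:ℂ))⁻¹) atTop (𝓝 0) := by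
    refine squeeze_zero_norm' (a := fun n : ℕ => ‖y-z‖ * ((n:ℝ) - ‖z‖)⁻¹) ?_ ?_
    · filter_upwards [eventually_ge_atTop (⌈‖z‖⌉₊ + 1)] with n hn
      have hn' : ‖z‖ + 1 ≤ (n:ℝ) := by
        calc ‖z‖ + 1 ≤ (⌈‖z‖⌉₊ : ℝ) + 1 := by gcongr; exact Nat.le_ceil _
        _ ≤ (n:ℝ) := by exact_mod_cast hn
      have hpos : 0 < (n:ℝ) - ‖z‖ := by linarith
      have hge : (n:ℝ) - ‖z‖ ≤ ‖z + (n:ℂ)‖ := by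
        calc (n:ℝ) - ‖z‖ ≤ ‖(n:ℂ)‖ - ‖z‖ := by rw [Complex.norm_natCast]
          _ ≤ ‖z + (n:ℂ)‖ := by
              have h := norm_sub_norm_le ((n:ℂ)) (z + (n:ℂ))
              have h2 : (n:ℂ) - (z + (n:ℂ)) = -z := by ring
              rw [h2, norm_neg] at h
              linarith
      rw [norm_mul, norm_inv]
      gcongr
    · have h1 : Tendsto (fun n : ℕ => (n:ℝ) - ‖z‖) atTop atTop :=
        tendsto_atTop_add_const_right _ _ tendsto_natCast_atTop_atTop
      simpa using (h1.inv_tendsto_atTop).const_mul ‖y-z‖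
  have := hmain.const_add 1
  simpa using this

lemma ratio_tendsto (x y z w : ℂ) (hz : ∀ n : ℕ, z ≠ -(n : ℂ)) :
    Tendsto (fun n : ℕ => (x+(n:ℂ))*(y+(n:ℂ))*w/((z+(n:ℂ))*((n:ℂ)+1))) atTop (𝓝 w) := by
  have he : (fun n : ℕ => (x+(n:ℂ))*(y+(n:ℂ))*w/((z+(n:ℂ))*((n:ℂ)+1)))
      = fun n : ℕ => w * ((x+(n:ℂ))/((n:ℂ)+1)) * ((y+(n:ℂ))/(z+(n:ℂ))) := by
    funext n
    field_simp
  rw [he]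
  have h := ((L1 x).const_mul w).mul (L2 y z hz)
  simpa using h

lemma summable_norm_term (x y z : ℂ) (hz : ∀ n : ℕ, z ≠ -(n : ℂ)) {w : ℂ} (hw : ‖w‖ < 1) :
    Summable (fun n : ℕ => ‖pch x n * pch y n / (pch z n * (n.factorial : ℂ)) * w ^ n‖) := by
  set f : ℕ → ℂ := fun n => pch x n * pch y n / (pch z n * (n.factorial : ℂ)) * w ^ n with hf
  have hzn : ∀ n : ℕ, z + (n:ℂ) ≠ 0 := fun n h => hz n (by linear_combination h)
  have hrec : ∀ n : ℕ, f (n+1) = f n * ((x+(n:ℂ))*(y+(n:ℂ))*w/((z+(n:ℂ))*((n:ℂ)+1))) := by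
    intro n
    have h1 : pch z n ≠ 0 := pch_ne_zero z hz n
    have h2 : ((n.factorial : ℂ)) ≠ 0 := by exact_mod_cast n.factorial_ne_zero
    have h3 : ((n:ℂ)+1) ≠ 0 := Nat.cast_add_one_ne_zero n
    simp only [hf, pch_succ, pow_succ, Nat.factorial_succ]
    push_cast
    field_simp
  set r : ℝ := (1 + ‖w‖)/2 with hr
  have hr1 : r < 1 := by rw [hr]; linarith
  have hwr : ‖w‖ < r := by rw [hr]; linarith
  have hev : ∀ᶠ n : ℕ in atTop, ‖(x+(n:ℂ))*(y+(n:ℂ))*w/((z+(n:ℂ))*((n:ℂ)+1))‖ < r :=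
    ((ratio_tendsto x y z w hz).norm).eventually_lt_const hwr
  apply summable_of_ratio_norm_eventually_le hr1
  filter_upwards [hev] with n hn
  rw [norm_norm, norm_norm]
  show ‖f (n+1)‖ ≤ r * ‖f n‖
  rw [hrec n, norm_mul]
  calc ‖f n‖ * ‖(x+(n:ℂ))*(y+(n:ℂ))*w/((z+(n:ℂ))*((n:ℂ)+1))‖
      ≤ ‖f n‖ * r := mul_le_mul_of_nonneg_left hn.le (norm_nonneg _)
    _ = r * ‖f n‖ := mul_comm _ _

end Summability

section Binomial

lemma slit_of_ball {u : ℂ} (hu : u ∈ Metric.ball (0:ℂ) 1) : (1 - u) ∈ Complex.slitPlane := by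
  rw [mem_ball_zero_iff] at hu
  left
  have : |u.re| ≤ ‖u‖ := abs_re_le_norm u
  simp only [sub_re, one_re]
  have := abs_le.mp this
  linarith [this.2]

lemma binomial_diff (s : ℂ) : DifferentiableOn ℂ (fun u : ℂ => (1-u)^s) (Metric.ball 0 1) := by
  intro u hu
  apply DifferentiableAt.differentiableWithinAt
  exact DifferentiableAt.cpow ((differentiable_const (1:ℂ)).sub differentiable_id).differentiableAt
    (differentiableAt_const s) (slit_of_ball hu)

lemma binomial_iter (s : ℂ) (n : ℕ) :
    ∀ u ∈ Metric.ball (0:ℂ) 1,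
      iteratedDeriv n (fun v : ℂ => (1-v)^s) u = pch (-s) n * (1-u)^(s - n) := by
  induction n with
  | zero => intro u _; simp [pch_zero]
  | succ n ih =>
    intro u hu
    rw [iteratedDeriv_succ]
    have hev : iteratedDeriv n (fun v : ℂ => (1-v)^s)
        =ᶠ[𝓝 u] fun v => pch (-s) n * (1-v)^(s - n) := by
      filter_upwards [isOpen_ball.mem_nhds hu] with v hv using ih v hv
    rw [hev.deriv_eq]
    have h1 : HasDerivAt (fun v : ℂ => 1 - v) (-1) u := (hasDerivAt_id u).const_sub 1
    have h2 : HasDerivAt (fun v : ℂ => pch (-s) n * (1-v)^(s-(n:ℂ)))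
        (pch (-s) n * ((s-(n:ℂ)) * (1-u)^(s-(n:ℂ)-1) * (-1))) u :=
      (h1.cpow_const (c := s-(n:ℂ)) (slit_of_ball hu)).const_mul (pch (-s) n)
    rw [h2.deriv]
    have e1 : s - ((n+1:ℕ):ℂ) = s - n - 1 := by push_cast; ring
    rw [pch_succ, e1]
    ring

lemma binomial_hasSum (s : ℂ) {w : ℂ} (hw : ‖w‖ < 1) :
    HasSum (fun n : ℕ => pch (-s) n / (n.factorial : ℂ) * w ^ n) ((1 - w) ^ s) := by
  have hball : w ∈ Metric.ball (0:ℂ) 1 := mem_ball_zero_iff.mpr hw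
  have H := Complex.hasSum_taylorSeries_on_ball (binomial_diff s) hball
  have h0 : (0:ℂ) ∈ Metric.ball (0:ℂ) 1 := by simp
  have he : (fun n : ℕ => pch (-s) n / (n.factorial : ℂ) * w ^ n)
      = fun n : ℕ => (n.factorial : ℂ)⁻¹ • (w - 0) ^ n
          • iteratedDeriv n (fun v : ℂ => (1-v)^s) 0 := by
    funext n
    rw [binomial_iter s n 0 h0]
    simp only [smul_eq_mul, sub_zero, one_cpow]
    rw [div_eq_mul_inv]
    ring
  rw [he]
  exact H

end Binomial

section Assembly

lemma cauchy_coeff (α β γ : ℂ) (hγ : ∀ n : ℕ, γ ≠ -(n:ℂ)) (w : ℂ) (n : ℕ) :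
    ∑ k ∈ range (n+1),
      (pch (γ-α) k * pch (γ-β) k / (pch γ k * (k.factorial:ℂ)) * w^k)
        * (pch (α+β-γ) (n-k) / (((n-k).factorial : ℕ) : ℂ) * w^(n-k))
    = pch α n * pch β n / (pch γ n * (n.factorial:ℂ)) * w^n := by
  have key : ∀ k ∈ range (n+1),
      (pch (γ-α) k * pch (γ-β) k / (pch γ k * (k.factorial:ℂ)) * w^k)
        * (pch (α+β-γ) (n-k) / (((n-k).factorial : ℕ) : ℂ) * w^(n-k))
      = ((n.choose k : ℂ) * pch (γ-α) k * pch (γ-β) k * pch (α+β-γ) (n-k)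
          * pch (γ+k) (n-k)) * (w^n / (pch γ n * (n.factorial:ℂ))) := by
    intro k hk
    rw [mem_range] at hk
    obtain ⟨m, rfl⟩ : ∃ m, n = k + m := ⟨n - k, by omega⟩
    have e0 : k + m - k = m := by omega
    rw [e0]
    have hfac : (((k+m).factorial : ℕ) : ℂ)
        = ((k+m).choose k : ℂ) * (k.factorial : ℂ) * (m.factorial : ℂ) := by
      rw [← Nat.cast_mul, ← Nat.cast_mul]
      congr 1
      have := Nat.choose_mul_factorial_mul_factorial (Nat.le_add_right k m)
      rw [e0] at this
      exact this.symm
    have hp : pch γ (k+m) = pch γ k * pch (γ+k) m := pch_add γ k m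
    have h1 : pch γ k ≠ 0 := pch_ne_zero γ hγ k
    have h2 : pch (γ+(k:ℂ)) m ≠ 0 := by
      apply pch_ne_zero
      intro j h
      apply hγ (j+k)
      push_cast
      linear_combination h
    have h3 : (k.factorial : ℂ) ≠ 0 := by exact_mod_cast k.factorial_ne_zero
    have h4 : (m.factorial : ℂ) ≠ 0 := by exact_mod_cast m.factorial_ne_zero
    have h5 : ((k+m).choose k : ℂ) ≠ 0 := by
      exact_mod_cast (Nat.choose_pos (Nat.le_add_right k m)).ne'
    rw [hp, hfac, pow_add]
    field_simp
  rw [Finset.sum_congr rfl key, ← Finset.sum_mul]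
  have hs := saalschutz (γ-α) (γ-β) γ n
  have e0 : γ-(γ-α)-(γ-β) = α+β-γ := by ring
  have e1 : γ-(γ-α) = α := by ring
  have e2 : γ-(γ-β) = β := by ring
  rw [e0, e1, e2] at hs
  rw [hs]
  ring

end Assembly

/-- The Gauss hypergeometric series ₂F₁(α,β,γ;w) = Σ (α)_n(β)_n wⁿ/((γ)_n n!). -/
noncomputable def hyp2F1 (α β γ w : ℂ) : ℂ :=
  ∑' n : ℕ,
    ((ascPochhammer ℂ n).eval α * (ascPochhammer ℂ n).eval β
      / ((ascPochhammer ℂ n).eval γ * (n.factorial : ℂ))) * w ^ n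

/- STATEMENT 11: For γ ∉ ℤ_{≤0} and |w| < 1, the Euler transformation holds:
₂F₁(α,β,γ;w) = (1-w)^{γ-α-β} ₂F₁(γ-α, γ-β, γ; w), with the principal branch. -/
theorem euler_transformation (α β γ w : ℂ)
    (hγ : ∀ n : ℕ, γ ≠ -(n : ℂ)) (hw : ‖w‖ < 1) :
    hyp2F1 α β γ w = (1 - w) ^ (γ - α - β) * hyp2F1 (γ - α) (γ - β) γ w := by
  have h1 : ∀ n : ℕ, (1:ℂ) ≠ -(n:ℂ) := by
    intro n h
    have := congrArg Complex.re h
    simp at this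
    linarith [Nat.cast_nonneg (α := ℝ) n]
  -- summable norms
  have hA : Summable (fun n : ℕ =>
      ‖pch (γ-α) n * pch (γ-β) n / (pch γ n * (n.factorial : ℂ)) * w ^ n‖) :=
    summable_norm_term (γ-α) (γ-β) γ hγ hw
  have hB : Summable (fun n : ℕ => ‖pch (α+β-γ) n / (n.factorial : ℂ) * w ^ n‖) := by
    have h := summable_norm_term (α+β-γ) 1 1 h1 hw
    have he : (fun n : ℕ => ‖pch (α+β-γ) n * pch 1 n / (pch 1 n * (n.factorial : ℂ)) * w ^ n‖)
        = fun n : ℕ => ‖pch (α+β-γ) n / (n.factorial : ℂ) * w ^ n‖ := by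
      funext n
      rw [pch_one_eq, mul_div_mul_right _ _ (by exact_mod_cast n.factorial_ne_zero :
        ((n.factorial : ℕ) : ℂ) ≠ 0)]
    rwa [he] at h
  -- binomial series
  have hBsum : HasSum (fun n : ℕ => pch (α+β-γ) n / (n.factorial : ℂ) * w ^ n)
      ((1 - w) ^ (γ-α-β)) := by
    have h := binomial_hasSum (γ-α-β) hw
    have he : -(γ-α-β) = α+β-γ := by ring
    rwa [he] at h
  have hAdef : hyp2F1 (γ-α) (γ-β) γ w
      = ∑' n : ℕ, pch (γ-α) n * pch (γ-β) n / (pch γ n * (n.factorial : ℂ)) * w ^ n := rfl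
  have hcauchy := tsum_mul_tsum_eq_tsum_sum_range_of_summable_norm hA hB
  calc hyp2F1 α β γ w
      = ∑' n : ℕ, pch α n * pch β n / (pch γ n * (n.factorial : ℂ)) * w ^ n := rfl
    _ = ∑' n : ℕ, ∑ k ∈ range (n+1),
          (pch (γ-α) k * pch (γ-β) k / (pch γ k * (k.factorial:ℂ)) * w^k)
            * (pch (α+β-γ) (n-k) / (((n-k).factorial : ℕ) : ℂ) * w^(n-k)) := by
        refine tsum_congr fun n => ?_
        exact (cauchy_coeff α β γ hγ w n).symm
    _ = (∑' n : ℕ, pch (γ-α) n * pch (γ-β) n / (pch γ n * (n.factorial : ℂ)) * w ^ n)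
          * (∑' n : ℕ, pch (α+β-γ) n / (n.factorial : ℂ) * w ^ n) := hcauchy.symm
    _ = (1 - w) ^ (γ - α - β) * hyp2F1 (γ - α) (γ - β) γ w := by
        rw [← hAdef, hBsum.tsum_eq]
        ring
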